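/- Let γ > 0 and let w₁, w₃ : (ξ, η) → ℝ be a maximal solution of the system w₁' = γ·w₁·w₃, w₃' = w₁² with w₁ and w₃ everywhere positive, where maximal means the solution does not extend to a solution on any open interval strictly containing (ξ, η) (so that η < ∞). Then for any t₁ ∈ (ξ, η), the integral ∫_{t₁}^{η} w₁(t)·√(w₃(t)) dt diverges to +∞. (Geometrically: the corresponding biaxial metric g = w₁²w₃ dt² + w₃σ₁² + w₃σ₂² + (w₁²/w₃)σ₃² is complete at the t = η end.) -/

import Mathlib

open Set Metric MeasureTheory intervalIntegral

private lemma hasDerivAt_fst' {f : ℝ → ℝ × ℝ} {p : ℝ × ℝ} {t : ℝ} (h : HasDerivAt f p t) :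
    HasDerivAt (fun s => (f s).1) p.1 t := by
  exact ((ContinuousLinearMap.fst ℝ ℝ ℝ).hasFDerivAt.comp_hasDerivAt t h)

private lemma hasDerivAt_snd' {f : ℝ → ℝ × ℝ} {p : ℝ × ℝ} {t : ℝ} (h : HasDerivAt f p t) :
    HasDerivAt (fun s => (f s).2) p.2 t := by
  exact ((ContinuousLinearMap.snd ℝ ℝ ℝ).hasFDerivAt.comp_hasDerivAt t h)

private lemma mono_of_derivpos {I : Set ℝ} (hIconn : I.OrdConnected) {w d : ℝ → ℝ}
    (hd : ∀ t ∈ I, HasDerivAt w (d t) t) (hpos : ∀ t ∈ I, 0 < d t) :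
    ∀ ⦃s t : ℝ⦄, s ∈ I → t ∈ I → s ≤ t → w s ≤ w t := by
  intro s t hs ht hst
  rcases eq_or_lt_of_le hst with rfl | hlt
  · exact le_rfl
  have hsub : Icc s t ⊆ I := hIconn.out hs ht
  have hsm : StrictMonoOn w (Icc s t) := by
    apply strictMonoOn_of_deriv_pos (convex_Icc s t)
      (fun x hx => (hd x (hsub hx)).continuousAt.continuousWithinAt)
    intro x hx
    rw [interior_Icc] at hx
    have hxI : x ∈ I := hsub (Ioo_subset_Icc_self hx)
    rw [(hd x hxI).deriv]
    exact hpos x hxI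
  exact (hsm (left_mem_Icc.2 hst) (right_mem_Icc.2 hst) hlt).le

/-- The biaxial reduced system `w₁' = γ·w₁·w₃`, `w₃' = w₁²` on a set `J`. -/
def BiaxialSystem (γ : ℝ) (w₁ w₃ : ℝ → ℝ) (J : Set ℝ) : Prop :=
  (∀ t ∈ J, HasDerivAt w₁ (γ * w₁ t * w₃ t) t) ∧
  (∀ t ∈ J, HasDerivAt w₃ ((w₁ t) ^ 2) t)

/-- A solution of the biaxial system on an open interval `I` is maximal if it does not
extend to a solution of the same system on any open interval strictly containing `I`. -/
def BiaxialMaximalSolution (γ : ℝ) (w₁ w₃ : ℝ → ℝ) (I : Set ℝ) : Prop :=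
  BiaxialSystem γ w₁ w₃ I ∧
  ∀ J : Set ℝ, IsOpen J → J.OrdConnected → I ⊆ J → I ≠ J →
    ¬ ∃ w₁' w₃' : ℝ → ℝ, BiaxialSystem γ w₁' w₃' J ∧
      Set.EqOn w₁' w₁ I ∧ Set.EqOn w₃' w₃ I

set_option maxHeartbeats 4000000 in
/-- For a maximal positive solution of `w₁' = γ·w₁·w₃`, `w₃' = w₁²`
(`γ > 0`) on an open interval `(ξ, η)`, the integral `∫_{t₁}^{η} w₁·√w₃ dt` diverges
for any `t₁` in the interval; i.e. the corresponding biaxial metric is complete at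
the `t = η` end. -/
theorem biaxial_maximal_solution_complete_at_eta
    (γ : ℝ) (hγ : 0 < γ)
    (I : Set ℝ) (hIopen : IsOpen I) (hIconn : I.OrdConnected)
    (w₁ w₃ : ℝ → ℝ)
    (hmax : BiaxialMaximalSolution γ w₁ w₃ I)
    (h1pos : ∀ t ∈ I, 0 < w₁ t) (h3pos : ∀ t ∈ I, 0 < w₃ t)
    (t₁ : ℝ) (ht₁ : t₁ ∈ I) :
    ¬ MeasureTheory.IntegrableOn (fun t => w₁ t * Real.sqrt (w₃ t))
      (I ∩ Set.Ioi t₁) := by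
  intro hint
  obtain ⟨⟨hd1, hd3⟩, hmaxpr⟩ := hmax
  have hIne : I.Nonempty := ⟨t₁, ht₁⟩
  have hmeasI : MeasurableSet (I ∩ Ioi t₁) := hIopen.measurableSet.inter measurableSet_Ioi
  have hmono1 : ∀ ⦃s t : ℝ⦄, s ∈ I → t ∈ I → s ≤ t → w₁ s ≤ w₁ t :=
    mono_of_derivpos hIconn hd1 (fun t ht =>
      mul_pos (mul_pos hγ (h1pos t ht)) (h3pos t ht))
  have hmono3 : ∀ ⦃s t : ℝ⦄, s ∈ I → t ∈ I → s ≤ t → w₃ s ≤ w₃ t :=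
    mono_of_derivpos hIconn hd3 (fun t ht => pow_pos (h1pos t ht) 2)
  have hcont1 : ContinuousOn w₁ I := fun t ht => (hd1 t ht).continuousAt.continuousWithinAt
  have hcont3 : ContinuousOn w₃ I := fun t ht => (hd3 t ht).continuousAt.continuousWithinAt
  -- the integrand
  set g : ℝ → ℝ := fun t => w₁ t * Real.sqrt (w₃ t) with hg_def
  clear_value g
  have hgpos : ∀ t ∈ I, 0 < g t := fun t ht => by
    rw [hg_def]
    exact mul_pos (h1pos t ht) (Real.sqrt_pos.mpr (h3pos t ht))
  by_cases hbdd : BddAbove I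
  case neg =>
    -- I is unbounded above: integrand bounded below by a positive constant on infinite measure
    have hIoi : I ∩ Ioi t₁ = Ioi t₁ := by
      apply inter_eq_right.mpr
      intro t ht
      obtain ⟨y, hyI, hy⟩ := not_bddAbove_iff.mp hbdd t
      exact hIconn.out ht₁ hyI ⟨le_of_lt ht, hy.le⟩
    rw [hIoi] at hint
    set c : ℝ := g t₁ with hc_def
    have hc : 0 < c := hgpos t₁ ht₁
    have hle : ∀ᵐ x ∂(volume.restrict (Ioi t₁)), ‖c‖ ≤ g x := by
      rw [ae_restrict_iff' measurableSet_Ioi]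
      refine ae_of_all _ fun x hx => ?_
      have hxI : x ∈ I := by
        have := hIoi ▸ (mem_inter ?_ hx)
        · obtain ⟨y, hyI, hy⟩ := not_bddAbove_iff.mp hbdd x
          exact hIconn.out ht₁ hyI ⟨(le_of_lt hx), hy.le⟩
        · obtain ⟨y, hyI, hy⟩ := not_bddAbove_iff.mp hbdd x
          exact hIconn.out ht₁ hyI ⟨(le_of_lt hx), hy.le⟩
      rw [Real.norm_eq_abs, abs_of_nonneg hc.le, hc_def, hg_def]
      exact mul_le_mul (hmono1 ht₁ hxI (le_of_lt hx))
        (Real.sqrt_le_sqrt (hmono3 ht₁ hxI (le_of_lt hx)))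
        (Real.sqrt_nonneg _) (h1pos x hxI).le
    have hconst : Integrable (fun _ => c) (volume.restrict (Ioi t₁)) :=
      hint.mono' aestronglyMeasurable_const hle
    rcases (integrable_const_iff).mp hconst with h | h
    · exact hc.ne' h
    · have h' := measure_lt_top (volume.restrict (Ioi t₁)) univ
      rw [Measure.restrict_apply_univ, Real.volume_Ioi] at h'
      exact (lt_irrefl _ h').elim
  case pos =>
    set η := sSup I with hη_def
    clear_value η
    have hηub : ∀ t ∈ I, t ≤ η := fun t ht => hη_def ▸ le_csSup hbdd ht
    have hηnotmem : η ∉ I := by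
      intro h
      obtain ⟨δ, hδ, hball⟩ := Metric.isOpen_iff.mp hIopen η h
      have hmem : η + δ / 2 ∈ I := hball (by
        simp only [mem_ball, Real.dist_eq]
        rw [abs_of_nonneg (by linarith)]
        linarith)
      linarith [hηub _ hmem]
    have ht₁η : t₁ < η := lt_of_le_of_ne (hηub t₁ ht₁) (fun h => hηnotmem (h ▸ ht₁))
    have hIcoI : ∀ t : ℝ, t₁ ≤ t → t < η → t ∈ I := by
      intro t h1 h2
      obtain ⟨y, hyI, hy⟩ := exists_lt_of_lt_csSup hIne (hη_def ▸ h2)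
      exact hIconn.out ht₁ hyI ⟨h1, hy.le⟩
    -- energy conservation
    set E : ℝ := (w₁ t₁) ^ 2 - γ * (w₃ t₁) ^ 2 with hE_def
    clear_value E
    have henergy : ∀ t : ℝ, t₁ ≤ t → t < η → (w₁ t) ^ 2 - γ * (w₃ t) ^ 2 = E := by
      intro t h1 h2
      rcases eq_or_lt_of_le h1 with rfl | hlt
      · exact hE_def.symm
      have hsub : Icc t₁ t ⊆ I := fun x hx => hIcoI x hx.1 (lt_of_le_of_lt hx.2 h2)
      have hder : ∀ x ∈ Ico t₁ t,
          HasDerivWithinAt (fun y => (w₁ y) ^ 2 - γ * (w₃ y) ^ 2) 0 (Ici x) x := by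
        intro x hx
        have hxI : x ∈ I := hsub ⟨hx.1, hx.2.le⟩
        have H : HasDerivAt (fun y => (w₁ y) ^ 2 - γ * (w₃ y) ^ 2)
            ((2 * w₁ x ^ 1 * (γ * w₁ x * w₃ x)) - γ * (2 * w₃ x ^ 1 * (w₁ x ^ 2))) x :=
          ((hd1 x hxI).pow 2).sub (HasDerivAt.const_mul γ ((hd3 x hxI).pow 2))
        have : (2 * w₁ x ^ 1 * (γ * w₁ x * w₃ x)) - γ * (2 * w₃ x ^ 1 * (w₁ x ^ 2)) = 0 := by
          ring
        rw [this] at H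
        exact H.hasDerivWithinAt
      have hcont : ContinuousOn (fun y => (w₁ y) ^ 2 - γ * (w₃ y) ^ 2) (Icc t₁ t) :=
        (((hcont1.mono hsub).pow 2).sub (continuousOn_const.mul ((hcont3.mono hsub).pow 2)))
      rw [hE_def]
      exact constant_of_has_deriv_right_zero hcont hder t (right_mem_Icc.2 h1)
    -- the Lipschitz-type bound w₁ ≤ K w₃
    set Q : ℝ := Real.sqrt (γ * (w₃ t₁) ^ 2 + |E|) with hQ_def
    set K : ℝ := Q / w₃ t₁ with hK_def
    clear_value Q K
    have h3t₁ : 0 < w₃ t₁ := h3pos t₁ ht₁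
    have hQ0 : 0 ≤ Q := hQ_def ▸ Real.sqrt_nonneg _
    have hK0 : 0 ≤ K := hK_def ▸ div_nonneg hQ0 h3t₁.le
    have hwK : ∀ t : ℝ, t₁ ≤ t → t < η → w₁ t ≤ K * w₃ t := by
      intro t h1 h2
      have htI : t ∈ I := hIcoI t h1 h2
      have h3 : w₃ t₁ ≤ w₃ t := hmono3 ht₁ htI h1
      have e := henergy t h1 h2
      have hsq : (w₁ t * w₃ t₁) ^ 2 ≤ (Q * w₃ t) ^ 2 := by
        have hQsq : Q ^ 2 = γ * (w₃ t₁) ^ 2 + |E| := by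
          rw [hQ_def]
          exact Real.sq_sqrt (by positivity)
        have hEle : E ≤ |E| := le_abs_self E
        have h3sq : (w₃ t₁) ^ 2 ≤ (w₃ t) ^ 2 := by nlinarith
        have habs : 0 ≤ |E| := abs_nonneg E
        nlinarith [h3pos t htI]
      have h0 : 0 ≤ w₁ t * w₃ t₁ := mul_nonneg (h1pos t htI).le h3t₁.le
      have h0' : 0 ≤ Q * w₃ t := mul_nonneg hQ0 (h3pos t htI).le
      rw [hK_def, div_mul_eq_mul_div, le_div_iff₀ h3t₁]
      calc w₁ t * w₃ t₁ = Real.sqrt ((w₁ t * w₃ t₁) ^ 2) := (Real.sqrt_sq h0).symm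
        _ ≤ Real.sqrt ((Q * w₃ t) ^ 2) := Real.sqrt_le_sqrt hsq
        _ = Q * w₃ t := Real.sqrt_sq h0'
    -- boundedness of w₃ and w₁ from the assumed integrability
    set M : ℝ := ∫ t in I ∩ Ioi t₁, g t with hM_def
    clear_value M
    have hg_nonneg_ae : 0 ≤ᵐ[volume.restrict (I ∩ Ioi t₁)] g :=
      (ae_restrict_iff' hmeasI).mpr (ae_of_all _ fun x hx => (hgpos x hx.1).le)
    have hM0 : 0 ≤ M := hM_def ▸ setIntegral_nonneg hmeasI fun x hx => (hgpos x hx.1).le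
    have hKM0 : 0 ≤ K / 2 * M := mul_nonneg (by linarith) hM0
    have hsqrtb : ∀ s : ℝ, t₁ ≤ s → s < η →
        Real.sqrt (w₃ s) ≤ Real.sqrt (w₃ t₁) + K / 2 * M := by
      intro s h1 h2
      rcases eq_or_lt_of_le h1 with rfl | hlt
      · linarith
      have hsub : Icc t₁ s ⊆ I := fun x hx => hIcoI x hx.1 (lt_of_le_of_lt hx.2 h2)
      have huIcc : uIcc t₁ s = Icc t₁ s := uIcc_of_le h1
      have hφd : ∀ x ∈ Icc t₁ s, HasDerivAt (fun y => Real.sqrt (w₃ y))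
          ((w₁ x) ^ 2 / (2 * Real.sqrt (w₃ x))) x := by
        intro x hx
        have hxI : x ∈ I := hsub hx
        have h := (Real.hasDerivAt_sqrt (ne_of_gt (h3pos x hxI))).comp x (hd3 x hxI)
        have heq : (w₁ x) ^ 2 / (2 * Real.sqrt (w₃ x))
            = 1 / (2 * Real.sqrt (w₃ x)) * (w₁ x ^ 2) := by ring
        rw [heq]
        exact h
      have hφ'cont : ContinuousOn (fun x => (w₁ x) ^ 2 / (2 * Real.sqrt (w₃ x))) (Icc t₁ s) := by
        apply ((hcont1.mono hsub).pow 2).div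
          (continuousOn_const.mul (Real.continuous_sqrt.comp_continuousOn (hcont3.mono hsub)))
        intro x hx
        exact (mul_pos two_pos (Real.sqrt_pos.mpr (h3pos x (hsub hx)))).ne'
      have hgcont' : ContinuousOn g (Icc t₁ s) := by
        rw [hg_def]
        exact (hcont1.mono hsub).mul
          (Real.continuous_sqrt.comp_continuousOn (hcont3.mono hsub))
      have hint1 : IntervalIntegrable (fun x => (w₁ x) ^ 2 / (2 * Real.sqrt (w₃ x))) volume t₁ s :=
        (huIcc ▸ hφ'cont : ContinuousOn _ (uIcc t₁ s)).intervalIntegrable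
      have hint2 : IntervalIntegrable (fun x => K / 2 * g x) volume t₁ s :=
        ((huIcc ▸ (continuousOn_const.mul hgcont') : ContinuousOn _ (uIcc t₁ s))).intervalIntegrable
      have hFTC : ∫ t in t₁..s, (w₁ t) ^ 2 / (2 * Real.sqrt (w₃ t))
          = Real.sqrt (w₃ s) - Real.sqrt (w₃ t₁) :=
        intervalIntegral.integral_eq_sub_of_hasDerivAt (fun x hx => hφd x (huIcc ▸ hx)) hint1
      have hmono_int : ∫ t in t₁..s, (w₁ t) ^ 2 / (2 * Real.sqrt (w₃ t))
          ≤ ∫ t in t₁..s, K / 2 * g t := by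
        apply intervalIntegral.integral_mono_on h1 hint1 hint2
        intro x hx
        have hxI : x ∈ I := hsub hx
        have hw := hwK x hx.1 (lt_of_le_of_lt hx.2 h2)
        have hsp : 0 < Real.sqrt (w₃ x) := Real.sqrt_pos.mpr (h3pos x hxI)
        have hss : Real.sqrt (w₃ x) * Real.sqrt (w₃ x) = w₃ x :=
          Real.mul_self_sqrt (h3pos x hxI).le
        rw [div_le_iff₀ (mul_pos two_pos hsp)]
        calc w₁ x ^ 2 ≤ K * w₃ x * w₁ x := by
              nlinarith [mul_nonneg (sub_nonneg.2 hw) (h1pos x hxI).le]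
          _ = K / 2 * g x * (2 * Real.sqrt (w₃ x)) := by
              rw [hg_def]
              rw [show K / 2 * (w₁ x * Real.sqrt (w₃ x)) * (2 * Real.sqrt (w₃ x))
                = K * w₁ x * (Real.sqrt (w₃ x) * Real.sqrt (w₃ x)) from by ring, hss]
              ring
      have hconst_mul : ∫ t in t₁..s, K / 2 * g t = K / 2 * ∫ t in t₁..s, g t :=
        intervalIntegral.integral_const_mul _ _
      have hIocsub : Ioc t₁ s ⊆ I ∩ Ioi t₁ :=
        fun x hx => ⟨hIcoI x hx.1.le (lt_of_le_of_lt hx.2 h2), hx.1⟩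
      have hto_M : ∫ t in t₁..s, g t ≤ M := by
        rw [intervalIntegral.integral_of_le h1, hM_def]
        exact setIntegral_mono_set hint hg_nonneg_ae (HasSubset.Subset.eventuallyLE hIocsub)
      have hKpos2 : (0:ℝ) ≤ K / 2 := by linarith
      nlinarith [mul_le_mul_of_nonneg_left hto_M hKpos2]
    set B3 : ℝ := Real.sqrt (w₃ t₁) + K / 2 * M with hB3_def
    clear_value B3
    have hB30 : 0 ≤ B3 := hB3_def ▸ add_nonneg (Real.sqrt_nonneg _) hKM0
    have hw3b : ∀ t : ℝ, t₁ ≤ t → t < η → w₃ t ≤ B3 ^ 2 := by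
      intro t h1 h2
      have h := hsqrtb t h1 h2
      have h3 := (h3pos t (hIcoI t h1 h2)).le
      calc w₃ t = Real.sqrt (w₃ t) ^ 2 := (Real.sq_sqrt h3).symm
        _ ≤ B3 ^ 2 := pow_le_pow_left₀ (Real.sqrt_nonneg _) h 2
    set B1 : ℝ := Real.sqrt (γ * (B3 ^ 2) ^ 2 + |E|) with hB1_def
    clear_value B1
    have hw1b : ∀ t : ℝ, t₁ ≤ t → t < η → w₁ t ≤ B1 := by
      intro t h1 h2
      have htI := hIcoI t h1 h2
      have e := henergy t h1 h2
      have h3b := hw3b t h1 h2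
      have h1sq : w₁ t ^ 2 ≤ γ * (B3 ^ 2) ^ 2 + |E| := by
        nlinarith [le_abs_self E,
          mul_le_mul_of_nonneg_left (mul_self_le_mul_self (h3pos t htI).le h3b) hγ.le]
      calc w₁ t = Real.sqrt (w₁ t ^ 2) := (Real.sqrt_sq (h1pos t htI).le).symm
        _ ≤ B1 := hB1_def ▸ Real.sqrt_le_sqrt h1sq
    -- the vector field and uniform bounds
    set W : ℝ → ℝ × ℝ := fun t => (w₁ t, w₃ t) with hW_def
    set v : ℝ × ℝ → ℝ × ℝ := fun p => (γ * p.1 * p.2, p.1 ^ 2) with hv_def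
    have hv : ContDiff ℝ 1 v :=
      ((contDiff_const.mul contDiff_fst).mul contDiff_snd).prodMk (contDiff_fst.pow 2)
    have hWd : ∀ t ∈ I, HasDerivAt W (v (W t)) t := fun t ht => (hd1 t ht).prodMk (hd3 t ht)
    clear_value W v
    set ρ : ℝ := max B1 (B3 ^ 2) with hρ_def
    clear_value ρ
    have hρ0 : 0 ≤ ρ := hρ_def ▸ le_trans (sq_nonneg B3) (le_max_right _ _)
    have hnormW : ∀ t : ℝ, t₁ ≤ t → t < η → ‖W t‖ ≤ ρ := by
      intro t h1 h2
      have htI := hIcoI t h1 h2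
      have e1 : ‖w₁ t‖ ≤ ρ := by
        rw [Real.norm_eq_abs, abs_of_pos (h1pos t htI), hρ_def]
        exact le_trans (hw1b t h1 h2) (le_max_left _ _)
      have e2 : ‖w₃ t‖ ≤ ρ := by
        rw [Real.norm_eq_abs, abs_of_pos (h3pos t htI), hρ_def]
        exact le_trans (hw3b t h1 h2) (le_max_right _ _)
      calc ‖W t‖ = max ‖w₁ t‖ ‖w₃ t‖ := by rw [hW_def]; rfl
        _ ≤ ρ := max_le e1 e2
    set r : ℝ := ρ + 1 with hr_def
    clear_value r
    have hr1 : 1 ≤ r := by linarith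
    have hr0 : 0 < r := by linarith
    have hcomp_bdd : ∀ x : ℝ × ℝ, x ∈ closedBall (0 : ℝ × ℝ) r → |x.1| ≤ r ∧ |x.2| ≤ r := by
      intro x hx
      rw [mem_closedBall, dist_zero_right] at hx
      constructor
      · rw [← Real.norm_eq_abs]
        exact le_trans (norm_fst_le x) hx
      · rw [← Real.norm_eq_abs]
        exact le_trans (norm_snd_le x) hx
    set C : ℝ := (γ + 1) * r ^ 2 with hC_def
    clear_value C
    have hC0 : 0 < C := by
      rw [hC_def]
      nlinarith [hγ]
    have hCbound : ∀ x ∈ closedBall (0 : ℝ × ℝ) r, ‖v x‖ ≤ C := by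
      intro x hx
      obtain ⟨h1, h2⟩ := hcomp_bdd x hx
      have hab : |x.1| * |x.2| ≤ r * r := mul_le_mul h1 h2 (abs_nonneg _) hr0.le
      have haa : |x.1| * |x.1| ≤ r * r := mul_le_mul h1 h1 (abs_nonneg _) hr0.le
      have hb1 : ‖γ * x.1 * x.2‖ ≤ C := by
        rw [Real.norm_eq_abs, abs_mul, abs_mul, abs_of_pos hγ, hC_def]
        nlinarith [abs_nonneg x.1, abs_nonneg x.2, hγ.le]
      have hb2 : ‖x.1 ^ 2‖ ≤ C := by
        rw [Real.norm_eq_abs, abs_of_nonneg (sq_nonneg _), hC_def]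
        nlinarith [sq_abs x.1, hγ.le, sq_nonneg r]
      calc ‖v x‖ = max ‖γ * x.1 * x.2‖ ‖x.1 ^ 2‖ := by rw [hv_def]; rfl
        _ ≤ C := max_le hb1 hb2
    -- Lipschitz constant for v on the big ball
    set L : NNReal := Real.toNNReal (2 * (γ + 1) * r) with hL_def
    have hLcoe : (L : ℝ) = 2 * (γ + 1) * r := by
      rw [hL_def]
      exact Real.coe_toNNReal _ (by positivity)
    have hlip : LipschitzOnWith L v (closedBall (0 : ℝ × ℝ) r) := by
      rw [lipschitzOnWith_iff_dist_le_mul]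
      intro x hx y hy
      obtain ⟨hx1, hx2⟩ := hcomp_bdd x hx
      obtain ⟨hy1, hy2⟩ := hcomp_bdd y hy
      have hdnn : (0:ℝ) ≤ dist x y := dist_nonneg
      have hxy1 : |x.1 - y.1| ≤ dist x y := by
        rw [← Real.dist_eq]
        exact le_trans (le_max_left _ _) (le_of_eq Prod.dist_eq.symm)
      have hxy2 : |x.2 - y.2| ≤ dist x y := by
        rw [← Real.dist_eq]
        exact le_trans (le_max_right _ _) (le_of_eq Prod.dist_eq.symm)
      have hvd : dist (v x) (v y)
          = max (dist (γ * x.1 * x.2) (γ * y.1 * y.2)) (dist (x.1 ^ 2) (y.1 ^ 2)) := by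
        rw [hv_def]; rfl
      rw [hvd, hLcoe]
      apply max_le
      · rw [Real.dist_eq]
        have e : γ * x.1 * x.2 - (γ * y.1 * y.2)
            = γ * x.1 * (x.2 - y.2) + γ * y.2 * (x.1 - y.1) := by ring
        rw [e]
        refine le_trans (abs_add_le _ _) ?_
        rw [abs_mul, abs_mul, abs_mul, abs_mul, abs_of_pos hγ]
        have b1 : γ * |x.1| * |x.2 - y.2| ≤ γ * r * dist x y :=
          mul_le_mul (mul_le_mul_of_nonneg_left hx1 hγ.le) hxy2 (abs_nonneg _) (by positivity)
        have b2 : γ * |y.2| * |x.1 - y.1| ≤ γ * r * dist x y :=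
          mul_le_mul (mul_le_mul_of_nonneg_left hy2 hγ.le) hxy1 (abs_nonneg _) (by positivity)
        nlinarith [mul_nonneg hr0.le hdnn]
      · rw [Real.dist_eq]
        have e : x.1 ^ 2 - y.1 ^ 2 = (x.1 + y.1) * (x.1 - y.1) := by ring
        rw [e, abs_mul]
        have hsum : |x.1 + y.1| ≤ 2 * r := le_trans (abs_add_le _ _) (by linarith)
        have b3 : |x.1 + y.1| * |x.1 - y.1| ≤ 2 * r * dist x y :=
          mul_le_mul hsum hxy1 (abs_nonneg _) (by positivity)
        nlinarith [mul_nonneg hr0.le hdnn]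
    -- choose the starting time s₀ close to η
    set ε : ℝ := 1 / C with hε_def
    clear_value ε
    have hε0 : 0 < ε := by rw [hε_def]; positivity
    have hltη : max t₁ (η - ε / 2) < η := max_lt ht₁η (by linarith)
    obtain ⟨s₀, hs₀I, hs₀gt⟩ := exists_lt_of_lt_csSup hIne (hη_def ▸ hltη)
    have hs₀t₁ : t₁ < s₀ := lt_of_le_of_lt (le_max_left _ _) hs₀gt
    have hs₀η : s₀ < η := lt_of_le_of_ne (hηub _ hs₀I) (fun h => hηnotmem (h ▸ hs₀I))
    have hηε : η < s₀ + ε := by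
      have := lt_of_le_of_lt (le_max_right _ _) hs₀gt
      linarith
    -- local solution through (s₀, W s₀) by Picard–Lindelöf
    have hx₀ρ : ‖W s₀‖ ≤ ρ := hnormW s₀ hs₀t₁.le hs₀η
    have hballsub : closedBall (W s₀) 1 ⊆ closedBall (0 : ℝ × ℝ) r := by
      intro y hy
      rw [mem_closedBall] at hy ⊢
      calc dist y 0 ≤ dist y (W s₀) + dist (W s₀) 0 := dist_triangle _ _ _
        _ ≤ 1 + ρ := add_le_add hy (by rw [dist_zero_right]; exact hx₀ρ)
        _ = r := by rw [hr_def]; ring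
    have hpl : IsPicardLindelof (fun _ => v) (tmin := s₀ - ε) (tmax := s₀ + ε)
        ⟨s₀, by constructor <;> linarith⟩ (W s₀) 1 0 C.toNNReal L :=
      IsPicardLindelof.of_time_independent
        (fun x hx => by
          rw [Real.coe_toNNReal _ hC0.le]
          exact hCbound x (hballsub (by simpa using hx)))
        (hlip.mono (by simpa using hballsub))
        (by norm_num [Real.coe_toNNReal _ hC0.le, hε_def, hC0.ne'])
    obtain ⟨f, hf0, hfd'⟩ := hpl.exists_eq_forall_mem_Icc_hasDerivWithinAt₀
    have hf0 : f s₀ = W s₀ := hf0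
    have hfD : ∀ t ∈ Ioo (s₀ - ε) (s₀ + ε), HasDerivAt f (v (f t)) t := fun t ht =>
      (hfd' t (Ioo_subset_Icc_self ht)).hasDerivAt (Icc_mem_nhds ht.1 ht.2)
    have hIcoIoo : ∀ t : ℝ, s₀ ≤ t → t < η → t ∈ Ioo (s₀ - ε) (s₀ + ε) :=
      fun t h1 h2 => ⟨by linarith, by linarith⟩
    -- local uniqueness
    have key : ∀ τ, s₀ ≤ τ → τ < η → f τ = W τ → f =ᶠ[nhds τ] W := by
      intro τ h1 h2 heqτ
      obtain ⟨K', s', hs', hlip'⟩ := (hv.contDiffAt (x := W τ)).exists_lipschitzOnWith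
      have hτIoo := hIcoIoo τ h1 h2
      have hτI : τ ∈ I := hIcoI τ (le_trans hs₀t₁.le h1) h2
      have hfc : ContinuousAt f τ := (hfD τ hτIoo).continuousAt
      have hWc : ContinuousAt W τ := (hWd τ hτI).continuousAt
      have hfev : ∀ᶠ t in nhds τ, HasDerivAt f (v (f t)) t ∧ f t ∈ s' := by
        filter_upwards [Ioo_mem_nhds hτIoo.1 hτIoo.2,
          hfc.preimage_mem_nhds (by rwa [heqτ])] with t ht hts
        exact ⟨hfD t ht, hts⟩
      have hWev : ∀ᶠ t in nhds τ, HasDerivAt W (v (W t)) t ∧ W t ∈ s' := by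
        filter_upwards [hIopen.mem_nhds hτI, hWc.preimage_mem_nhds hs'] with t ht hts
        exact ⟨hWd t ht, hts⟩
      exact ODE_solution_unique_of_eventually (v := fun _ => v) (s := fun _ => s')
        (Filter.Eventually.of_forall fun _ => hlip') hfev hWev heqτ
    -- global uniqueness on [s₀, η) via sInf
    have huniq : ∀ t, s₀ ≤ t → t < η → f t = W t := by
      by_contra hc
      push_neg at hc
      obtain ⟨t₂, ht₂1, ht₂2, hne⟩ := hc
      set T := {t : ℝ | s₀ ≤ t ∧ t < η ∧ f t ≠ W t} with hT_def
      have hTne : T.Nonempty := ⟨t₂, ht₂1, ht₂2, hne⟩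
      have hTbd : BddBelow T := ⟨s₀, fun t ht => ht.1⟩
      have hus₀ : s₀ ≤ sInf T := le_csInf hTne fun t ht => ht.1
      have huη : sInf T < η := lt_of_le_of_lt (csInf_le hTbd ⟨ht₂1, ht₂2, hne⟩) ht₂2
      have hbelow : ∀ t, s₀ ≤ t → t < sInf T → f t = W t := by
        intro t h1 h2
        by_contra hne'
        exact absurd (csInf_le hTbd ⟨h1, lt_trans h2 huη, hne'⟩) (not_le.mpr h2)
      have hfu : f (sInf T) = W (sInf T) := by
        rcases eq_or_lt_of_le hus₀ with heq' | hlt'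
        · rw [← heq', hf0]
        · have hfc : ContinuousAt f (sInf T) := (hfD _ (hIcoIoo _ hus₀ huη)).continuousAt
          have huI : sInf T ∈ I := hIcoI _ (le_trans hs₀t₁.le hus₀) huη
          have hWc : ContinuousAt W (sInf T) := (hWd _ huI).continuousAt
          have hmem : Ioo s₀ (sInf T) ∈ nhdsWithin (sInf T) (Iio (sInf T)) :=
            Ioo_mem_nhdsLT_of_mem ⟨hlt', le_rfl⟩
          have hev : W =ᶠ[nhdsWithin (sInf T) (Iio (sInf T))] f :=
            (Filter.eventuallyEq_of_mem hmem (fun t ht => hbelow t ht.1.le ht.2)).symm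
          exact tendsto_nhds_unique hfc.continuousWithinAt
            (Filter.Tendsto.congr' hev hWc.continuousWithinAt)
      obtain ⟨δ, hδ0, hδ⟩ := Metric.eventually_nhds_iff.mp (key (sInf T) hus₀ huη hfu)
      obtain ⟨t₃, ht₃T, ht₃lt⟩ := (csInf_lt_iff hTbd hTne).mp
        (show sInf T < sInf T + δ by linarith)
      have ht₃ge : sInf T ≤ t₃ := csInf_le hTbd ht₃T
      exact ht₃T.2.2 (hδ (show dist t₃ (sInf T) < δ by
        rw [Real.dist_eq, abs_of_nonneg (by linarith)]
        linarith))
    -- build the extension and contradict maximality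
    set s₁ : ℝ := (s₀ + η) / 2 with hs₁_def
    clear_value s₁
    have hs₀s₁ : s₀ < s₁ := by rw [hs₁_def]; linarith
    have hs₁η : s₁ < η := by rw [hs₁_def]; linarith
    set J := I ∪ Ioo s₀ (s₀ + ε) with hJ_def
    have hJopen : IsOpen J := hIopen.union isOpen_Ioo
    have hJconn : J.OrdConnected := by
      constructor
      rintro x (hx | hx) y (hy | hy) z hz
      · exact mem_union_left _ (hIconn.out hx hy hz)
      · rcases le_or_gt z s₀ with h | h
        · exact mem_union_left _ (hIconn.out hx hs₀I ⟨hz.1, h⟩)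
        · exact mem_union_right _ ⟨h, lt_of_le_of_lt hz.2 hy.2⟩
      · exact mem_union_left _ (hIconn.out hs₀I hy ⟨le_of_lt (lt_of_lt_of_le hx.1 hz.1), hz.2⟩)
      · exact mem_union_right _ ⟨lt_of_lt_of_le hx.1 hz.1, lt_of_le_of_lt hz.2 hy.2⟩
    have hIsubJ : I ⊆ J := hJ_def ▸ subset_union_left
    have hInJ : I ≠ J := by
      intro h
      have hz : (η + (s₀ + ε)) / 2 ∈ J :=
        hJ_def ▸ mem_union_right _ ⟨by linarith, by linarith⟩
      rw [← h] at hz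
      have := hηub _ hz
      linarith
    set W' : ℝ → ℝ × ℝ := fun t => if t < s₁ then W t else f t with hW'_def
    have hW'eqW : ∀ t, t < s₁ → W' t = W t := fun t h => by
      simp only [hW'_def]
      exact if_pos h
    have hW'eqf : ∀ t ∈ Ioo s₀ (s₀ + ε), W' t = f t := by
      intro t ht
      rcases lt_or_ge t s₁ with h | h
      · simp only [hW'_def, if_pos h]
        exact (huniq t ht.1.le (lt_trans h hs₁η)).symm
      · simp only [hW'_def]
        exact if_neg (not_lt.mpr h)
    have hJmemlt : ∀ t ∈ J, t < s₁ → t ∈ I := by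
      intro t ht hlt
      rcases (hJ_def ▸ ht : t ∈ I ∪ Ioo s₀ (s₀ + ε)) with h | h
      · exact h
      · exact hIcoI t (by linarith [h.1]) (lt_trans hlt hs₁η)
    have hJIoo : ∀ t ∈ J, s₁ ≤ t → t ∈ Ioo s₀ (s₀ + ε) := by
      intro t ht hge
      rcases (hJ_def ▸ ht : t ∈ I ∪ Ioo s₀ (s₀ + ε)) with h | h
      · have htη : t < η := lt_of_le_of_ne (hηub t h) (fun hh => hηnotmem (hh ▸ h))
        exact ⟨lt_of_lt_of_le hs₀s₁ hge, by linarith⟩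
      · exact h
    have hW'd : ∀ t ∈ J, HasDerivAt W' (v (W' t)) t := by
      intro t htJ
      rcases lt_or_ge t s₁ with h | h
      · have htI := hJmemlt t htJ h
        have hev : W' =ᶠ[nhds t] W :=
          Filter.eventuallyEq_of_mem (Iio_mem_nhds h) (fun x hx => hW'eqW x hx)
        rw [hW'eqW t h]
        exact (hWd t htI).congr_of_eventuallyEq hev
      · have htIoo := hJIoo t htJ h
        have htIoo' : t ∈ Ioo (s₀ - ε) (s₀ + ε) := ⟨by linarith [htIoo.1], htIoo.2⟩
        have hev : W' =ᶠ[nhds t] f :=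
          Filter.eventuallyEq_of_mem (isOpen_Ioo.mem_nhds htIoo) hW'eqf
        rw [hW'eqf t htIoo]
        exact (hfD t htIoo').congr_of_eventuallyEq hev
    apply hmaxpr J hJopen hJconn hIsubJ hInJ
    refine ⟨fun t => (W' t).1, fun t => (W' t).2, ⟨?_, ?_⟩, ?_, ?_⟩
    · intro t ht
      have h := hasDerivAt_fst' (hW'd t ht)
      simp only [hv_def] at h
      exact h
    · intro t ht
      have h := hasDerivAt_snd' (hW'd t ht)
      simp only [hv_def] at h
      exact h
    · intro t ht
      show (W' t).1 = w₁ t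
      rcases lt_or_ge t s₁ with h | h
      · rw [hW'eqW t h]
        simp only [hW_def]
      · have htIoo := hJIoo t (hIsubJ ht) h
        rw [hW'eqf t htIoo, huniq t htIoo.1.le
          (lt_of_le_of_ne (hηub t ht) (fun hh => hηnotmem (hh ▸ ht)))]
        simp only [hW_def]
    · intro t ht
      show (W' t).2 = w₃ t
      rcases lt_or_ge t s₁ with h | h
      · rw [hW'eqW t h]
        simp only [hW_def]
      · have htIoo := hJIoo t (hIsubJ ht) h
        rw [hW'eqf t htIoo, huniq t htIoo.1.le
          (lt_of_le_of_ne (hηub t ht) (fun hh => hηnotmem (hh ▸ ht)))]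
        simp only [hW_def]
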